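/- Let a : (0,∞) → [0,∞) be measurable and let b be a daughter distribution function. Then for every measurable f : (0,∞) → [0,∞) with ∫₀^∞ a(y) y f(y) dy < ∞, one has ∫₀^∞ x (Ff)(x) dx = 0 (the fragmentation operator conserves mass). -/

import Mathlib

open MeasureTheory Set Filter
open scoped ENNReal

/-- The fragmentation operator `(Ff)(x) = −a(x) f(x) + ∫ₓ^∞ a(y) b(x,y) f(y) dy`. -/
noncomputable def fragOp (a : ℝ → ℝ) (b : ℝ → ℝ → ℝ) (f : ℝ → ℝ) (x : ℝ) : ℝ :=
  -(a x * f x) + ∫ y in Set.Ioi x, a y * b x y * f y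

/-- the fragmentation operator conserves mass: `∫₀^∞ x (Ff)(x) dx = 0`. -/
theorem stmt16 (a : ℝ → ℝ) (b : ℝ → ℝ → ℝ) (f : ℝ → ℝ)
    (ha_meas : Measurable a) (ha_nonneg : ∀ x, 0 ≤ a x)
    (hb_meas : Measurable (Function.uncurry b))
    (hb_nonneg : ∀ x y, 0 ≤ b x y)
    (hb_supp : ∀ y : ℝ, 0 < y → ∀ᵐ x ∂(volume : Measure ℝ), y < x → b x y = 0)
    (hb_mass : ∀ y : ℝ, 0 < y → ∫ x in Set.Ioo 0 y, x * b x y = y)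
    (hf_meas : Measurable f) (hf_nonneg : ∀ x, 0 ≤ f x)
    (hf_int : ∫⁻ y in Set.Ioi (0:ℝ), ENNReal.ofReal (a y * y * f y) < ∞) :
    ∫ x in Set.Ioi (0:ℝ), x * fragOp a b f x = 0 := by
  classical
  have hb' : Measurable fun p : ℝ × ℝ => b p.1 p.2 := hb_meas
  -- the kernel
  set K : ℝ × ℝ → ℝ≥0∞ :=
    fun p => if p.1 < p.2 then ENNReal.ofReal (a p.2 * b p.1 p.2 * f p.2) else 0 with hKdef
  have hK : Measurable K := by
    apply Measurable.ite (measurableSet_lt measurable_fst measurable_snd)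
    · exact (((ha_meas.comp measurable_snd).mul hb').mul
        (hf_meas.comp measurable_snd)).ennreal_ofReal
    · exact measurable_const
  set G : ℝ → ℝ≥0∞ := fun x => ∫⁻ y, K (x, y) with hGdef
  have hG_meas : Measurable G := hK.lintegral_prod_right'
  -- G as a set lintegral
  have hG_set : ∀ x : ℝ, G x = ∫⁻ y in Set.Ioi x, ENNReal.ofReal (a y * b x y * f y) := by
    intro x
    rw [hGdef]
    rw [← lintegral_indicator measurableSet_Ioi]
    refine lintegral_congr fun y => ?_
    by_cases h : x < y
    · simp [hKdef, h, Set.indicator_of_mem (Set.mem_Ioi.2 h)]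
    · simp [hKdef, h, Set.indicator_of_notMem (fun hy => h (Set.mem_Ioi.1 hy))]
  -- measurability of slices
  have hbx : ∀ x : ℝ, Measurable fun y => a y * b x y * f y := fun x =>
    (ha_meas.mul (hb'.comp (measurable_const.prodMk measurable_id))).mul hf_meas
  have hby : ∀ y : ℝ, Measurable fun x => x * b x y := fun y =>
    measurable_id.mul (hb'.comp (measurable_id.prodMk measurable_const))
  have hKx : ∀ x : ℝ, Measurable fun y => K (x, y) := fun x =>
    hK.comp (measurable_const.prodMk measurable_id)
  -- the Bochner inner integral equals the toReal of G
  have hg : ∀ x : ℝ, (∫ y in Set.Ioi x, a y * b x y * f y) = (G x).toReal := by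
    intro x
    rw [integral_eq_lintegral_of_nonneg_ae
      (ae_of_all _ fun y => mul_nonneg (mul_nonneg (ha_nonneg y) (hb_nonneg x y)) (hf_nonneg y))
      ((hbx x).aestronglyMeasurable), hG_set]
  -- the key Tonelli computation
  have key : ∫⁻ x in Set.Ioi (0:ℝ), ENNReal.ofReal x * G x
      = ∫⁻ y in Set.Ioi (0:ℝ), ENNReal.ofReal (a y * y * f y) := by
    have hswap : ∫⁻ x in Set.Ioi (0:ℝ), ∫⁻ y, ENNReal.ofReal x * K (x, y)
        = ∫⁻ y, ∫⁻ x in Set.Ioi (0:ℝ), ENNReal.ofReal x * K (x, y) := by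
      refine lintegral_lintegral_swap ?_
      exact ((measurable_fst.ennreal_ofReal).mul hK).aemeasurable
    have hinner : ∀ y : ℝ, (∫⁻ x in Set.Ioi (0:ℝ), ENNReal.ofReal x * K (x, y))
        = Set.indicator (Set.Ioi (0:ℝ)) (fun y => ENNReal.ofReal (a y * y * f y)) y := by
      intro y
      by_cases hy : 0 < y
      · rw [Set.indicator_of_mem (Set.mem_Ioi.2 hy)]
        have hsplit : Set.Ioi (0:ℝ) = Set.Ioo 0 y ∪ Set.Ici y := by
          ext t
          simp only [Set.mem_Ioi, Set.mem_union, Set.mem_Ioo, Set.mem_Ici]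
          constructor
          · intro ht
            rcases lt_or_ge t y with h | h
            · exact Or.inl ⟨ht, h⟩
            · exact Or.inr h
          · rintro (⟨h, _⟩ | h)
            · exact h
            · exact lt_of_lt_of_le hy h
        have hdisj : Disjoint (Set.Ioo (0:ℝ) y) (Set.Ici y) :=
          Set.disjoint_left.2 fun t ht ht' => absurd ht.2 (not_lt.2 ht')
        rw [hsplit, lintegral_union measurableSet_Ici hdisj]
        have hzero : ∫⁻ x in Set.Ici y, ENNReal.ofReal x * K (x, y) = 0 := by
          have h1 : ∫⁻ x in Set.Ici y, ENNReal.ofReal x * K (x, y)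
              = ∫⁻ x in Set.Ici y, (0:ℝ≥0∞) := by
            refine setLIntegral_congr_fun_ae measurableSet_Ici (ae_of_all _ fun x hx => ?_)
            have : ¬ x < y := not_lt.2 hx
            simp [hKdef, this]
          rw [h1, lintegral_zero]
        rw [hzero, add_zero]
        have hcongr : ∫⁻ x in Set.Ioo (0:ℝ) y, ENNReal.ofReal x * K (x, y)
            = ∫⁻ x in Set.Ioo (0:ℝ) y,
                ENNReal.ofReal (x * b x y) * ENNReal.ofReal (a y * f y) := by
          refine setLIntegral_congr_fun_ae measurableSet_Ioo (ae_of_all _ fun x hx => ?_)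
          have hxy : x < y := hx.2
          have hx0 : (0:ℝ) ≤ x := le_of_lt hx.1
          simp only [hKdef, if_pos hxy]
          rw [← ENNReal.ofReal_mul hx0, ← ENNReal.ofReal_mul (mul_nonneg hx0 (hb_nonneg x y))]
          ring_nf
        rw [hcongr, lintegral_mul_const _ ((hby y).ennreal_ofReal)]
        have hint : IntegrableOn (fun x => x * b x y) (Set.Ioo 0 y) := by
          by_contra h
          have h0 := integral_undef h
          rw [hb_mass y hy] at h0
          exact absurd h0 (ne_of_gt hy)
        have hmass : ∫⁻ x in Set.Ioo (0:ℝ) y, ENNReal.ofReal (x * b x y) = ENNReal.ofReal y := by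
          rw [← ofReal_integral_eq_lintegral_ofReal hint
            ((ae_restrict_iff' measurableSet_Ioo).2
              (ae_of_all _ fun x hx => mul_nonneg hx.1.le (hb_nonneg x y))),
            hb_mass y hy]
        rw [hmass, ← ENNReal.ofReal_mul (le_of_lt hy)]
        congr 1
        ring
      · rw [Set.indicator_of_notMem (fun h => hy (Set.mem_Ioi.1 h))]
        have h1 : ∫⁻ x in Set.Ioi (0:ℝ), ENNReal.ofReal x * K (x, y)
            = ∫⁻ x in Set.Ioi (0:ℝ), (0:ℝ≥0∞) := by
          refine setLIntegral_congr_fun_ae measurableSet_Ioi (ae_of_all _ fun x hx => ?_)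
          have : ¬ x < y := fun h => hy (lt_trans (Set.mem_Ioi.1 hx) h)
          simp [hKdef, this]
        rw [h1, lintegral_zero]
    calc ∫⁻ x in Set.Ioi (0:ℝ), ENNReal.ofReal x * G x
        = ∫⁻ x in Set.Ioi (0:ℝ), ∫⁻ y, ENNReal.ofReal x * K (x, y) := by
          refine lintegral_congr fun x => ?_
          rw [hGdef]
          exact (lintegral_const_mul _ (hKx x)).symm
      _ = ∫⁻ y, ∫⁻ x in Set.Ioi (0:ℝ), ENNReal.ofReal x * K (x, y) := hswap
      _ = ∫⁻ y, Set.indicator (Set.Ioi (0:ℝ)) (fun y => ENNReal.ofReal (a y * y * f y)) y :=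
          lintegral_congr hinner
      _ = ∫⁻ y in Set.Ioi (0:ℝ), ENNReal.ofReal (a y * y * f y) :=
          lintegral_indicator measurableSet_Ioi _
  -- finiteness
  set M : ℝ≥0∞ := ∫⁻ y in Set.Ioi (0:ℝ), ENNReal.ofReal (a y * y * f y) with hMdef
  have hM_fin : M ≠ ∞ := ne_of_lt hf_int
  have hG_fin : ∀ᵐ x ∂(volume.restrict (Set.Ioi (0:ℝ))), ENNReal.ofReal x * G x < ∞ :=
    ae_lt_top ((measurable_id.ennreal_ofReal).mul hG_meas) (by rw [key]; exact hM_fin)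
  -- the positive part P and the negative part N
  set P : ℝ → ℝ := fun x => x * (G x).toReal with hPdef
  set N : ℝ → ℝ := fun x => x * (a x * f x) with hNdef
  have hP_meas : Measurable P := measurable_id.mul (ENNReal.measurable_toReal.comp hG_meas)
  have hN_meas : Measurable N := measurable_id.mul (ha_meas.mul hf_meas)
  have hP_nn : 0 ≤ᵐ[volume.restrict (Set.Ioi (0:ℝ))] P :=
    (ae_restrict_iff' measurableSet_Ioi).2
      (ae_of_all _ fun x hx => mul_nonneg (le_of_lt hx) ENNReal.toReal_nonneg)
  have hN_nn : 0 ≤ᵐ[volume.restrict (Set.Ioi (0:ℝ))] N :=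
    (ae_restrict_iff' measurableSet_Ioi).2
      (ae_of_all _ fun x hx =>
        mul_nonneg (le_of_lt hx) (mul_nonneg (ha_nonneg x) (hf_nonneg x)))
  have hPto : ∀ᵐ x ∂(volume.restrict (Set.Ioi (0:ℝ))),
      ENNReal.ofReal (P x) = ENNReal.ofReal x * G x := by
    filter_upwards [hG_fin, ae_restrict_mem measurableSet_Ioi] with x hfin hx
    have hGx : G x ≠ ∞ := by
      intro h
      rw [h, ENNReal.mul_top (by simpa using (ENNReal.ofReal_pos.2 hx).ne')] at hfin
      exact absurd hfin (lt_irrefl _)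
    rw [hPdef]
    rw [ENNReal.ofReal_mul (le_of_lt hx), ENNReal.ofReal_toReal hGx]
  have hPlint : ∫⁻ x in Set.Ioi (0:ℝ), ENNReal.ofReal (P x) = M := by
    rw [lintegral_congr_ae hPto, key]
  have hNlint : ∫⁻ x in Set.Ioi (0:ℝ), ENNReal.ofReal (N x) = M := by
    rw [hMdef]
    refine lintegral_congr fun x => ?_
    rw [hNdef]
    congr 1
    ring
  have hP_int : Integrable P (volume.restrict (Set.Ioi (0:ℝ))) :=
    ⟨hP_meas.aestronglyMeasurable,
      (hasFiniteIntegral_iff_ofReal hP_nn).2 (by rw [hPlint]; exact hf_int)⟩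
  have hN_int : Integrable N (volume.restrict (Set.Ioi (0:ℝ))) :=
    ⟨hN_meas.aestronglyMeasurable,
      (hasFiniteIntegral_iff_ofReal hN_nn).2 (by rw [hNlint]; exact hf_int)⟩
  have hPval : ∫ x in Set.Ioi (0:ℝ), P x = M.toReal := by
    rw [integral_eq_lintegral_of_nonneg_ae hP_nn hP_meas.aestronglyMeasurable, hPlint]
  have hNval : ∫ x in Set.Ioi (0:ℝ), N x = M.toReal := by
    rw [integral_eq_lintegral_of_nonneg_ae hN_nn hN_meas.aestronglyMeasurable, hNlint]
  have hfrag : ∀ x : ℝ, x * fragOp a b f x = P x - N x := by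
    intro x
    rw [hPdef, hNdef]
    simp only [fragOp, hg x]
    ring
  calc ∫ x in Set.Ioi (0:ℝ), x * fragOp a b f x
      = ∫ x in Set.Ioi (0:ℝ), (P x - N x) := by
        exact integral_congr_ae (ae_of_all _ hfrag)
    _ = (∫ x in Set.Ioi (0:ℝ), P x) - ∫ x in Set.Ioi (0:ℝ), N x := integral_sub hP_int hN_int
    _ = 0 := by rw [hPval, hNval, sub_self]
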